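/- Let n, d ≥ 1 and A ⊆ {1,...,n} nonempty. If s_A((Z/nZ)^d) = d_A((Z/nZ)^d) + n - 1, then ZS_A((Z/nZ)^d) = d_A((Z/nZ)^d) + n^d - 1. -/

import Mathlib

/-- A sequence `g` admits a nonempty subsequence with a zero linear combination
with coefficients drawn from `A` (with repetition allowed). -/
def hasZeroComb {G : Type*} [AddCommGroup G] (A : Finset ℕ) {k : ℕ} (g : Fin k → G) : Prop :=
  ∃ s : Finset (Fin k), s.Nonempty ∧ ∃ a : Fin k → ℕ,
    (∀ i ∈ s, a i ∈ A) ∧ ∑ i ∈ s, a i • g i = 0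
/-- A sequence `g` admits a subsequence of length exactly `m` with a zero linear
combination with coefficients drawn from `A`. -/
def hasZeroCombLen {G : Type*} [AddCommGroup G] (A : Finset ℕ) (m : ℕ) {k : ℕ} (g : Fin k → G) : Prop :=
  ∃ s : Finset (Fin k), s.card = m ∧ ∃ a : Fin k → ℕ,
    (∀ i ∈ s, a i ∈ A) ∧ ∑ i ∈ s, a i • g i = 0

/-- From any set of at least `E + n` indices, one can extract a subset of size `n`
with a zero `A`-combination, provided every sequence of length `E + n` has one. -/
lemma extract_one {G : Type*} [AddCommGroup G] (A : Finset ℕ) (E n : ℕ)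
    (H : ∀ g : Fin (E + n) → G, hasZeroCombLen A n g)
    {t : ℕ} (g : Fin t → G) (S : Finset (Fin t)) (hS : E + n ≤ S.card) :
    ∃ s : Finset (Fin t), s ⊆ S ∧ s.card = n ∧ ∃ a : Fin t → ℕ,
      (∀ i ∈ s, a i ∈ A) ∧ ∑ i ∈ s, a i • g i = 0 := by
  obtain ⟨S', hS'sub, hS'card⟩ := Finset.exists_subset_card_eq hS
  have e : {x // x ∈ S'} ≃ Fin (E + n) := S'.equivFin.trans (finCongr hS'card)
  obtain ⟨s₀, hs₀card, a₀, ha₀A, ha₀sum⟩ := H (fun j => g (e.symm j : Fin t))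
  have finj : Function.Injective (fun j : Fin (E + n) => ((e.symm j : {x // x ∈ S'}) : Fin t)) := by
    intro x y hxy
    exact e.symm.injective (Subtype.coe_injective hxy)
  set f : Fin (E + n) ↪ Fin t := ⟨fun j => ((e.symm j : {x // x ∈ S'}) : Fin t), finj⟩ with hf
  refine ⟨s₀.map f, ?_, by simp [hs₀card], ?_⟩
  · intro i hi
    obtain ⟨j, hj, rfl⟩ := Finset.mem_map.mp hi
    exact hS'sub (e.symm j).2
  · refine ⟨fun i => if hi : i ∈ S' then a₀ (e ⟨i, hi⟩) else 1, ?_, ?_⟩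
    · intro i hi
      obtain ⟨j, hj, rfl⟩ := Finset.mem_map.mp hi
      have hmem : (f j : Fin t) ∈ S' := (e.symm j).2
      simp only [hf, Function.Embedding.coeFn_mk] at hmem ⊢
      rw [dif_pos hmem]
      have h1 : (⟨((e.symm j : {x // x ∈ S'}) : Fin t), hmem⟩ : {x // x ∈ S'}) = e.symm j := rfl
      rw [h1, e.apply_symm_apply]
      exact ha₀A j hj
    · rw [Finset.sum_map, ← ha₀sum]
      apply Finset.sum_congr rfl
      intro j hj
      have hmem : ((e.symm j : {x // x ∈ S'}) : Fin t) ∈ S' := (e.symm j).2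
      simp only [hf, Function.Embedding.coeFn_mk]
      rw [dif_pos hmem]
      have h1 : (⟨((e.symm j : {x // x ∈ S'}) : Fin t), hmem⟩ : {x // x ∈ S'}) = e.symm j := rfl
      rw [h1, e.apply_symm_apply]

/-- Iterate the extraction `k` times to get a subset of size `k * n` with zero sum. -/
lemma extract_many {G : Type*} [AddCommGroup G] (A : Finset ℕ) (E n : ℕ)
    (H : ∀ g : Fin (E + n) → G, hasZeroCombLen A n g) (k : ℕ) :
    ∀ {t : ℕ} (g : Fin t → G) (S : Finset (Fin t)), E + k * n ≤ S.card →
    ∃ s : Finset (Fin t), s ⊆ S ∧ s.card = k * n ∧ ∃ a : Fin t → ℕ,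
      (∀ i ∈ s, a i ∈ A) ∧ ∑ i ∈ s, a i • g i = 0 := by
  induction k with
  | zero =>
    intro t g S _
    exact ⟨∅, by simp, by simp, fun _ => 1, by simp, by simp⟩
  | succ k ih =>
    intro t g S hS
    have hmul : (k + 1) * n = k * n + n := by ring
    obtain ⟨s₁, hs₁S, hs₁card, a₁, ha₁A, ha₁sum⟩ :=
      extract_one A E n H g S (by omega)
    have hsdcard : E + k * n ≤ (S \ s₁).card := by
      rw [Finset.card_sdiff_of_subset hs₁S, hs₁card]
      omega
    obtain ⟨s₂, hs₂S, hs₂card, a₂, ha₂A, ha₂sum⟩ := ih g (S \ s₁) hsdcard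
    have hdisj : Disjoint s₁ s₂ :=
      (Finset.disjoint_of_subset_right hs₂S Finset.disjoint_sdiff)
    refine ⟨s₁ ∪ s₂, Finset.union_subset hs₁S (hs₂S.trans (Finset.sdiff_subset)), ?_, ?_⟩
    · rw [Finset.card_union_of_disjoint hdisj, hs₁card, hs₂card]; omega
    · refine ⟨fun i => if i ∈ s₁ then a₁ i else a₂ i, ?_, ?_⟩
      · intro i hi
        rcases Finset.mem_union.mp hi with hi | hi
        · show (if i ∈ s₁ then a₁ i else a₂ i) ∈ A
          rw [if_pos hi]; exact ha₁A i hi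
        · show (if i ∈ s₁ then a₁ i else a₂ i) ∈ A
          rw [if_neg (Finset.disjoint_right.mp hdisj hi)]; exact ha₂A i hi
      · rw [Finset.sum_union hdisj]
        have h1 : ∑ i ∈ s₁, (if i ∈ s₁ then a₁ i else a₂ i) • g i = ∑ i ∈ s₁, a₁ i • g i :=
          Finset.sum_congr rfl (fun i hi => by rw [if_pos hi])
        have h2 : ∑ i ∈ s₂, (if i ∈ s₁ then a₁ i else a₂ i) • g i = ∑ i ∈ s₂, a₂ i • g i :=
          Finset.sum_congr rfl (fun i hi => by
            rw [if_neg (Finset.disjoint_right.mp hdisj hi)])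
        rw [h1, h2, ha₁sum, ha₂sum, add_zero]

theorem stmt15 {n d : ℕ} (hn : 1 ≤ n) (hd : 1 ≤ d) (A : Finset ℕ)
    (hA : A.Nonempty) (hAsub : A ⊆ Finset.Icc 1 n) (D : ℕ)
    (hD : IsLeast {t : ℕ | ∀ g : Fin t → (Fin d → ZMod n), hasZeroComb A g} D)
    (hs : IsLeast {t : ℕ | ∀ g : Fin t → (Fin d → ZMod n),
      hasZeroCombLen A n g} (D + n - 1)) :
    IsLeast {t : ℕ | ∀ g : Fin t → (Fin d → ZMod n),
      hasZeroCombLen A (n ^ d) g} (D + n ^ d - 1) := by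
  have hnpos : 1 ≤ n ^ d := Nat.one_le_pow _ _ hn
  -- D ≥ 1
  have hD1 : 1 ≤ D := by
    rcases Nat.eq_zero_or_pos D with h | h
    · exfalso
      have h0 := hD.1
      rw [h] at h0
      obtain ⟨s, ⟨i, hi⟩, -⟩ := h0 (fun i => i.elim0)
      exact i.elim0
    · exact h
  obtain ⟨E, rfl⟩ : ∃ E, D = E + 1 := ⟨D - 1, by omega⟩
  -- reformulate hs.1
  have hsm : ∀ g : Fin (E + n) → (Fin d → ZMod n), hasZeroCombLen A n g := by
    have h1 := hs.1
    have he : E + 1 + n - 1 = E + n := by omega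
    rw [he] at h1
    exact h1
  -- extremal sequence for d_A
  have hE : ¬ ∀ g : Fin E → (Fin d → ZMod n), hasZeroComb A g := by
    intro h
    have := hD.2 h
    omega
  obtain ⟨g₀, hg₀⟩ := not_forall.mp hE
  have hkey : E + 1 + n ^ d - 1 = E + n ^ d := by omega
  rw [hkey]
  constructor
  · -- membership: every sequence of length E + n^d has a zero comb of length n^d
    intro g
    have hpow : n ^ d = n ^ (d - 1) * n := by
      conv_lhs => rw [← Nat.sub_add_cancel hd]
      rw [pow_succ]
    obtain ⟨s, hsub, hcard, ha⟩ := extract_many A E n hsm (n ^ (d - 1)) g Finset.univ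
      (by rw [Finset.card_univ, Fintype.card_fin, ← hpow])
    exact ⟨s, by rw [hcard, ← hpow], ha⟩
  · -- lower bound
    intro t ht
    by_contra hlt
    push_neg at hlt
    set g : Fin t → (Fin d → ZMod n) :=
      fun i => if h : (i : ℕ) < E then g₀ ⟨i, h⟩ else 0 with hgdef
    obtain ⟨s, hcard, a, haA, hsum⟩ := ht g
    set s₁ := s.filter (fun i : Fin t => (i : ℕ) < E) with hs₁def
    set s₂ := s.filter (fun i : Fin t => ¬ (i : ℕ) < E) with hs₂def
    have hcards : s₁.card + s₂.card = n ^ d := by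
      rw [hs₁def, hs₂def, Finset.card_filter_add_card_filter_not, hcard]
    have hs₂card : s₂.card ≤ t - E := by
      calc s₂.card ≤ (Finset.range (t - E)).card := by
            apply Finset.card_le_card_of_injOn (fun i : Fin t => (i : ℕ) - E)
            · intro i hi
              simp only [hs₂def, Finset.mem_coe, Finset.mem_filter] at hi
              have := i.isLt
              simp only [Finset.mem_coe, Finset.mem_range]
              omega
            · intro i hi j hj hij
              simp only [hs₂def, Finset.coe_filter, Set.mem_setOf_eq] at hi hj
              have hij' : (i : ℕ) - E = (j : ℕ) - E := hij
              have hi2 := i.isLt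
              have hj2 := j.isLt
              exact Fin.ext (by omega)
        _ = t - E := Finset.card_range _
    have hs₁ne : s₁.Nonempty := by
      rw [← Finset.card_pos]
      omega
    obtain ⟨i₀, hi₀⟩ := hs₁ne
    have hi₀E : (i₀ : ℕ) < E := (Finset.mem_filter.mp hi₀).2
    have hEpos : 0 < E := by omega
    set F : Fin t → Fin E := fun i => if h : (i : ℕ) < E then ⟨i, h⟩ else ⟨0, hEpos⟩ with hFdef
    have hFval : ∀ i ∈ s₁, ((F i : Fin E) : ℕ) = (i : ℕ) := by
      intro i hi
      have hiE : (i : ℕ) < E := (Finset.mem_filter.mp hi).2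
      simp only [hFdef, dif_pos hiE]
    have hFinj : ∀ x ∈ s₁, ∀ y ∈ s₁, F x = F y → x = y := by
      intro x hx y hy hxy
      have h1 := hFval x hx
      have h2 := hFval y hy
      rw [hxy] at h1
      exact Fin.ext (by omega)
    apply hg₀
    refine ⟨s₁.image F, Finset.Nonempty.image ⟨i₀, hi₀⟩ F,
      fun j => if hj : (j : ℕ) < t then a ⟨j, hj⟩ else 1, ?_, ?_⟩
    · intro j hj
      obtain ⟨i, hi, rfl⟩ := Finset.mem_image.mp hj
      have hiE : (i : ℕ) < E := (Finset.mem_filter.mp hi).2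
      have hFi : F i = ⟨(i : ℕ), hiE⟩ := by simp only [hFdef, dif_pos hiE]
      have hlt' : ((⟨(i : ℕ), hiE⟩ : Fin E) : ℕ) < t := i.isLt
      show (if hj : ((F i : Fin E) : ℕ) < t then a ⟨(F i : Fin E), hj⟩ else 1) ∈ A
      rw [hFi, dif_pos hlt']
      have : (⟨((⟨(i : ℕ), hiE⟩ : Fin E) : ℕ), hlt'⟩ : Fin t) = i := rfl
      rw [this]
      exact haA i (Finset.filter_subset _ _ hi)
    · rw [Finset.sum_image hFinj]
      have hterm : ∀ i ∈ s₁,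
          (if hj : ((F i : Fin E) : ℕ) < t then a ⟨(F i : Fin E), hj⟩ else 1) • g₀ (F i)
            = a i • g i := by
        intro i hi
        have hiE : (i : ℕ) < E := (Finset.mem_filter.mp hi).2
        have hFi : F i = ⟨(i : ℕ), hiE⟩ := by simp only [hFdef, dif_pos hiE]
        rw [hFi]
        have hlt' : ((⟨(i : ℕ), hiE⟩ : Fin E) : ℕ) < t := i.isLt
        rw [dif_pos hlt']
        have h1 : (⟨((⟨(i : ℕ), hiE⟩ : Fin E) : ℕ), hlt'⟩ : Fin t) = i := rfl
        rw [h1]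
        have h2 : g i = g₀ ⟨(i : ℕ), hiE⟩ := by
          simp only [hgdef, dif_pos hiE]
        rw [h2]
      rw [Finset.sum_congr rfl hterm]
      have h2 : ∑ i ∈ s₂, a i • g i = 0 := by
        apply Finset.sum_eq_zero
        intro i hi
        have hiE : ¬ (i : ℕ) < E := (Finset.mem_filter.mp hi).2
        simp only [hgdef, dif_neg hiE, smul_zero]
      have h3 := Finset.sum_filter_add_sum_filter_not s (fun i : Fin t => (i : ℕ) < E)
        (fun i => a i • g i)
      rw [← hs₁def, ← hs₂def, h2, hsum] at h3
      simpa using h3
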